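/- In a real Hilbert space H, let A be a maximal monotone operator with resolvents J_λ = (I + λA)^{-1}. For all λ, μ > 0 and x, y ∈ H: (λ+μ)‖J_λx − J_μy‖² ≤ λ‖J_λx − y‖² + μ‖J_μy − x‖² − μ‖J_λx − x‖² − λ‖J_μy − y‖². In particular (setting y = J_λx), (1/μ)‖J_μJ_λx − J_λx‖ ≤ (1/λ)‖J_λx − x‖. -/

import Mathlib

theorem stmt_18 {H : Type*} [NormedAddCommGroup H] [InnerProductSpace ℝ H]
    [CompleteSpace H] (A : H → Set H)
    (hmono : ∀ x y x' y' : H, x' ∈ A x → y' ∈ A y →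
      0 ≤ (inner ℝ (x - y) (x' - y') : ℝ))
    (J : ℝ → H → H)
    (hJ : ∀ lam : ℝ, 0 < lam → ∀ x : H, lam⁻¹ • (x - J lam x) ∈ A (J lam x)) :
    ∀ lam mu : ℝ, 0 < lam → 0 < mu → ∀ x y : H,
      ((lam + mu) * ‖J lam x - J mu y‖ ^ 2
        ≤ lam * ‖J lam x - y‖ ^ 2 + mu * ‖J mu y - x‖ ^ 2
          - mu * ‖J lam x - x‖ ^ 2 - lam * ‖J mu y - y‖ ^ 2) ∧
      (1 / mu * ‖J mu (J lam x) - J lam x‖ ≤ 1 / lam * ‖J lam x - x‖) := by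
  intro lam mu hl hm x y
  constructor
  · have h0 := hmono (J lam x) (J mu y) _ _ (hJ lam hl x) (hJ mu hm y)
    rw [inner_sub_right, real_inner_smul_right, real_inner_smul_right] at h0
    set a := J lam x - J mu y with ha
    set b := x - J lam x with hb
    set c := y - J mu y with hc
    have e1 : J lam x - y = a - c := by rw [ha, hc]; abel
    have e2 : J mu y - x = -(a + b) := by rw [ha, hb]; abel
    have e3 : J lam x - x = -b := by rw [hb]; abel
    have e4 : J mu y - y = -c := by rw [hc]; abel
    clear_value a b c
    have hab : 0 ≤ mu * (inner ℝ a b : ℝ) - lam * (inner ℝ a c : ℝ) := by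
      calc (0:ℝ) ≤ lam * mu * (lam⁻¹ * (inner ℝ a b : ℝ) - mu⁻¹ * (inner ℝ a c : ℝ)) :=
            mul_nonneg (mul_pos hl hm).le h0
        _ = mu * (inner ℝ a b : ℝ) - lam * (inner ℝ a c : ℝ) := by
            field_simp
    rw [e1, e2, e3, e4, norm_neg, norm_neg, norm_neg, norm_sub_sq_real, norm_add_sq_real]
    nlinarith [hab]
  · have h0 := hmono (J lam x) (J mu (J lam x)) _ _ (hJ lam hl x)
      (hJ mu hm (J lam x))
    rw [inner_sub_right, real_inner_smul_right, real_inner_smul_right,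
      real_inner_self_eq_norm_sq] at h0
    set a := J lam x - J mu (J lam x) with ha
    set b := x - J lam x with hb
    have hxu : ‖J lam x - x‖ = ‖b‖ := by rw [hb, norm_sub_rev]
    have hvu : ‖J mu (J lam x) - J lam x‖ = ‖a‖ := by rw [ha, norm_sub_rev]
    clear_value a b
    have hcs := real_inner_le_norm a b
    rw [hxu, hvu]
    have h2 : lam * ‖a‖ ^ 2 ≤ mu * (inner ℝ a b : ℝ) := by
      calc lam * ‖a‖ ^ 2 = lam * mu * (mu⁻¹ * ‖a‖ ^ 2) := by field_simp
        _ ≤ lam * mu * (lam⁻¹ * (inner ℝ a b : ℝ)) := by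
            apply mul_le_mul_of_nonneg_left _ (mul_pos hl hm).le
            linarith
        _ = mu * (inner ℝ a b : ℝ) := by field_simp
    have hstep : lam * ‖a‖ ^ 2 ≤ mu * (‖a‖ * ‖b‖) :=
      h2.trans (mul_le_mul_of_nonneg_left hcs hm.le)
    rcases (norm_nonneg a).eq_or_lt with h | h
    · rw [← h, mul_zero]
      positivity
    · rw [div_mul_eq_mul_div, div_mul_eq_mul_div, div_le_div_iff₀ hm hl]
      nlinarith [hstep, h]
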